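/- arXiv:2110.05662 — 3 statements merged into one kernel-verified Lean document; each statement's English description precedes it below -/
import Mathlib

section
/- For all integers n ≥ 0 and f with 0 ≤ f ≤ n, the sum ∑_{d=0}^{f} (-1)^d q^{d(d+1)/2 - fd - f(n-f+1)} (q)_{n-f+d} (q)_f / ((q)_{f-d} (q)_{n-f} (q)_d) equals 1, where (q)_m = (q;q)_m. -/
/-- `(q)_m = (q;q)_m = ∏_{k=1}^m (1 - q^k)`. -/
noncomputable def qfac (q : ℂ) (m : ℕ) : ℂ := ∏ k ∈ Finset.range m, (1 - q ^ (k + 1))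

namespace UK

noncomputable def poch (q x : ℂ) (d : ℕ) : ℂ := ∏ k ∈ Finset.range d, (1 - x * q ^ k)

noncomputable def qb (q : ℂ) (f d : ℕ) : ℂ :=
  if d ≤ f then qfac q f / (qfac q d * qfac q (f - d)) else 0

lemma qfac_succ (q : ℂ) (m : ℕ) : qfac q (m + 1) = qfac q m * (1 - q ^ (m + 1)) :=
  Finset.prod_range_succ _ _

lemma qfac_zero (q : ℂ) : qfac q 0 = 1 := Finset.prod_range_zero _

lemma poch_succ (q x : ℂ) (d : ℕ) : poch q x (d + 1) = poch q x d * (1 - x * q ^ d) :=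
  Finset.prod_range_succ _ _

lemma poch_zero (q x : ℂ) : poch q x 0 = 1 := Finset.prod_range_zero _

section
variable {q : ℂ} (hq : q ≠ 0) (hfac : ∀ m : ℕ, qfac q m ≠ 0)

include hfac in
lemma one_sub_ne (k : ℕ) : (1 : ℂ) - q ^ (k + 1) ≠ 0 := fun h =>
  hfac (k + 1) (by rw [qfac_succ, h, mul_zero])

include hfac in
lemma qb_zero (f : ℕ) : qb q f 0 = 1 := by
  simp [qb, qfac_zero, div_self (hfac f)]

include hfac in
lemma qb_self (f : ℕ) : qb q f f = 1 := by
  simp [qb, qfac_zero, div_self (hfac f)]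

include hfac in
lemma pascal (f d : ℕ) (hd : d ≤ f) :
    qb q (f + 1) (d + 1) = qb q f (d + 1) + q ^ (f - d) * qb q f d := by
  rcases eq_or_lt_of_le hd with rfl | hlt
  · rw [qb_self hfac, qb_self hfac, qb, if_neg (by omega)]
    simp
  · have h1 : d + 1 ≤ f := hlt
    rw [qb, qb, qb, if_pos (by omega : d + 1 ≤ f + 1), if_pos h1, if_pos hd]
    have e1 : f + 1 - (d + 1) = f - d := by omega
    have e2 : f - (d + 1) = f - d - 1 := by omega
    rw [e1, e2]
    have e3 : qfac q (f - d) = qfac q (f - d - 1) * (1 - q ^ (f - d)) := by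
      rw [show f - d = (f - d - 1) + 1 from by omega, qfac_succ,
        show f - d - 1 + 1 = f - d from by omega]
    have h4 : (1 : ℂ) - q ^ (d + 1) ≠ 0 := one_sub_ne hfac d
    have h5 : (1 : ℂ) - q ^ (f - d) ≠ 0 := by
      have := one_sub_ne hfac (f - d - 1)
      rwa [show f - d - 1 + 1 = f - d from by omega] at this
    have hp : q ^ (f + 1) = q ^ (f - d) * q ^ (d + 1) := by
      rw [← pow_add]; congr 1; omega
    rw [qfac_succ q f, qfac_succ q d, e3, hp]
    field_simp [hfac f, hfac d, hfac (f - d - 1)]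
    ring

include hfac in
lemma pascal' (f d : ℕ) :
    qb q (f + 1) d = qb q f d +
      (if d = 0 then 0 else q ^ (f + 1 - d) * qb q f (d - 1)) := by
  cases d with
  | zero => rw [qb_zero hfac, qb_zero hfac]; simp
  | succ e =>
    rcases le_or_gt e f with he | he
    · rw [if_neg (by omega)]
      simpa [show f + 1 - (e + 1) = f - e from by omega] using pascal hfac f e he
    · rw [qb, if_neg (by omega), qb, if_neg (by omega), if_neg (by omega), qb,
        if_neg (by omega)]
      simp

include hq hfac in
lemma key (x : ℂ) (f : ℕ) :
    ∑ d ∈ Finset.range (f + 1),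
      (-1 : ℂ) ^ d * q ^ ((d : ℤ) * ((d : ℤ) + 1) / 2 - (f : ℤ) * (d : ℤ)) *
        qb q f d * poch q x d = x ^ f := by
  induction f with
  | zero => simp [qb_zero hfac, poch_zero]
  | succ f ih =>
    have hsplit : ∀ d ∈ Finset.range (f + 2),
        (-1 : ℂ) ^ d * q ^ ((d : ℤ) * ((d : ℤ) + 1) / 2 - ((f : ℤ) + 1) * (d : ℤ)) *
          qb q (f + 1) d * poch q x d
        = (-1 : ℂ) ^ d * q ^ ((d : ℤ) * ((d : ℤ) + 1) / 2 - ((f : ℤ) + 1) * (d : ℤ)) *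
            qb q f d * poch q x d
          + (if d = 0 then 0 else
              (-1 : ℂ) ^ d * q ^ ((d : ℤ) * ((d : ℤ) + 1) / 2 - ((f : ℤ) + 1) * (d : ℤ)) *
                (q ^ (f + 1 - d) * qb q f (d - 1)) * poch q x d) := by
      intro d _
      rw [pascal' hfac f d]
      split_ifs with h <;> ring
    calc ∑ d ∈ Finset.range (f + 1 + 1),
          (-1 : ℂ) ^ d * q ^ ((d : ℤ) * ((d : ℤ) + 1) / 2 - ((f : ℤ) + 1) * (d : ℤ)) *
            qb q (f + 1) d * poch q x d
        = ∑ d ∈ Finset.range (f + 2),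
            ((-1 : ℂ) ^ d * q ^ ((d : ℤ) * ((d : ℤ) + 1) / 2 - ((f : ℤ) + 1) * (d : ℤ)) *
              qb q f d * poch q x d
            + (if d = 0 then 0 else
                (-1 : ℂ) ^ d * q ^ ((d : ℤ) * ((d : ℤ) + 1) / 2 - ((f : ℤ) + 1) * (d : ℤ)) *
                  (q ^ (f + 1 - d) * qb q f (d - 1)) * poch q x d)) := by
          push_cast at hsplit ⊢
          exact Finset.sum_congr rfl hsplit
      _ = x ^ (f + 1) := by
          rw [Finset.sum_add_distrib]
          -- first sum: drop last term
          have hA : ∑ d ∈ Finset.range (f + 2),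
              (-1 : ℂ) ^ d * q ^ ((d : ℤ) * ((d : ℤ) + 1) / 2 - ((f : ℤ) + 1) * (d : ℤ)) *
                qb q f d * poch q x d
              = ∑ d ∈ Finset.range (f + 1),
                (-1 : ℂ) ^ d * q ^ ((d : ℤ) * ((d : ℤ) + 1) / 2 - ((f : ℤ) + 1) * (d : ℤ)) *
                  qb q f d * poch q x d := by
            rw [Finset.sum_range_succ, qb, if_neg (by omega)]
            simp
          rw [hA]
          -- second sum: reindex
          rw [Finset.sum_range_succ' _ (f + 1)]
          rw [if_pos rfl, add_zero]
          have hterm : ∀ e ∈ Finset.range (f + 1),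
              (if e + 1 = 0 then (0:ℂ) else
              (-1 : ℂ) ^ (e + 1) *
                q ^ (((e + 1 : ℕ) : ℤ) * (((e + 1 : ℕ) : ℤ) + 1) / 2 - ((f : ℤ) + 1) * ((e + 1 : ℕ) : ℤ)) *
                (q ^ (f + 1 - (e + 1)) * qb q f (e + 1 - 1)) * poch q x (e + 1))
              = -((-1 : ℂ) ^ e * q ^ ((e : ℤ) * ((e : ℤ) + 1) / 2 - ((f : ℤ) + 1) * (e : ℤ)) *
                    qb q f e * poch q x e)
                + x * ((-1 : ℂ) ^ e * q ^ ((e : ℤ) * ((e : ℤ) + 1) / 2 - (f : ℤ) * (e : ℤ)) *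
                    qb q f e * poch q x e) := by
            intro e he
            rw [if_neg (Nat.succ_ne_zero e)]
            push_cast
            have hef : e ≤ f := by
              have := Finset.mem_range.mp he; omega
            have hA1 : q ^ (((e : ℤ) + 1) * (((e : ℤ) + 1) + 1) / 2 - ((f : ℤ) + 1) * ((e : ℤ) + 1)) *
                q ^ (f - e) = q ^ ((e : ℤ) * ((e : ℤ) + 1) / 2 - ((f : ℤ) + 1) * (e : ℤ)) := by
              rw [← zpow_natCast q (f - e), ← zpow_add₀ hq]
              congr 1
              have h0 : ((f - e : ℕ) : ℤ) = (f : ℤ) - (e : ℤ) := by omega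
              rw [h0]
              ring_nf
              omega
            have hB1 : q ^ ((e : ℤ) * ((e : ℤ) + 1) / 2 - ((f : ℤ) + 1) * (e : ℤ)) * q ^ e
                = q ^ ((e : ℤ) * ((e : ℤ) + 1) / 2 - (f : ℤ) * (e : ℤ)) := by
              rw [← zpow_natCast q e, ← zpow_add₀ hq]
              congr 1
              ring_nf
            rw [poch_succ, pow_succ]
            linear_combination (-(-1 : ℂ) ^ e * qb q f e * poch q x e * (1 - x * q ^ e)) * hA1
              + (x * (-1 : ℂ) ^ e * qb q f e * poch q x e) * hB1
          rw [Finset.sum_congr rfl hterm, Finset.sum_add_distrib, Finset.sum_neg_distrib,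
            ← Finset.mul_sum, ih]
          ring
      
include hq hfac in
omit hq hfac in
lemma aux (u v P F M G D s : ℂ) (hM : M ≠ 0) (hG : G ≠ 0) (hD : D ≠ 0) :
    s * (u * v) * (M * P) * F / (G * M * D) = u * (s * v * (F / (D * G)) * P) := by
  field_simp

include hq hfac in
lemma qfac_add (m d : ℕ) : qfac q (m + d) = qfac q m * poch q (q ^ (m + 1)) d := by
  induction d with
  | zero => simp [poch_zero]
  | succ d ih =>
    rw [show m + (d + 1) = (m + d) + 1 from by omega, qfac_succ, ih, poch_succ, mul_assoc,
      ← pow_add, show m + 1 + d = m + d + 1 from by omega]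

end

end UK

/-- The vortex-partition-function evaluation for the unknot with one kink equals 1:
`∑_{d=0}^f (-1)^d q^{d(d+1)/2 - fd - f(n-f+1)} (q)_{n-f+d}(q)_f/((q)_{f-d}(q)_{n-f}(q)_d) = 1`. -/
theorem unknot_kink (q : ℂ) (hq : q ≠ 0) (hfac : ∀ m : ℕ, qfac q m ≠ 0)
    (n f : ℕ) (hf : f ≤ n) :
    ∑ d ∈ Finset.range (f + 1),
        (-1) ^ d *
          q ^ ((d : ℤ) * ((d : ℤ) + 1) / 2 - (f : ℤ) * d - (f : ℤ) * ((n : ℤ) - f + 1)) *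
          qfac q (n - f + d) * qfac q f / (qfac q (f - d) * qfac q (n - f) * qfac q d)
      = 1 := by
  set m := n - f with hm
  have hmz : ((m : ℕ) : ℤ) = (n : ℤ) - (f : ℤ) := by omega
  have hterm : ∀ d ∈ Finset.range (f + 1),
      (-1 : ℂ) ^ d *
          q ^ ((d : ℤ) * ((d : ℤ) + 1) / 2 - (f : ℤ) * d - (f : ℤ) * ((n : ℤ) - f + 1)) *
          qfac q (n - f + d) * qfac q f / (qfac q (f - d) * qfac q (n - f) * qfac q d)
      = q ^ (-((f : ℤ) * ((m : ℤ) + 1))) *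
          ((-1 : ℂ) ^ d * q ^ ((d : ℤ) * ((d : ℤ) + 1) / 2 - (f : ℤ) * (d : ℤ)) *
            UK.qb q f d * UK.poch q (q ^ (m + 1)) d) := by
    intro d hd
    have hdf : d ≤ f := by have := Finset.mem_range.mp hd; omega
    have hE : q ^ ((d : ℤ) * ((d : ℤ) + 1) / 2 - (f : ℤ) * d - (f : ℤ) * ((n : ℤ) - f + 1))
        = q ^ (-((f : ℤ) * ((m : ℤ) + 1))) * q ^ ((d : ℤ) * ((d : ℤ) + 1) / 2 - (f : ℤ) * (d : ℤ)) := by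
      rw [← zpow_add₀ hq, hmz]
      congr 1
      omega
    rw [hE, show n - f + d = m + d from rfl, UK.qfac_add hq hfac, UK.qb, if_pos hdf]
    have h1 := hfac m
    have h2 := hfac d
    have h3 := hfac (f - d)
    exact UK.aux _ _ _ _ _ _ _ _ h1 h3 h2
  rw [Finset.sum_congr rfl hterm, ← Finset.mul_sum, UK.key hq hfac]
  rw [← pow_mul, ← zpow_natCast q ((m + 1) * f), ← zpow_add₀ hq]
  have hz : (-((f : ℤ) * ((m : ℤ) + 1)) + (((m + 1) * f : ℕ) : ℤ)) = 0 := by push_cast; ring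
  rw [hz, zpow_zero]
end

section
/- The double-sum formula for the normalized colored Jones polynomial of the figure-eight knot equals the Habiro/Masbaum single-sum formula: for every nonnegative integer n, ∑_{0 ≤ d₂ ≤ d₁ ≤ n} (-1)^{d₁+d₂} q^{d₂(d₂-2d₁-2n-3)/2 + d₁(d₁+1)/2} (q)_{d₁}(q)_n / ((q)_{d₂}(q)_{d₁-d₂}(q)_{n-d₁}) = ∑_{d₁=0}^{n} q^{-(n+1)d₁} (q^{n+2};q)_{d₁} (q^{n-d₁+1};q)_{d₁}. -/
/-- `(x;q)_n = ∏_{k=0}^{n-1} (1 - x q^k)`. -/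
noncomputable def qPochNat (x q : ℂ) (n : ℕ) : ℂ := ∏ k ∈ Finset.range n, (1 - x * q ^ k)

lemma qfac_zero (q : ℂ) : qfac q 0 = 1 := by simp [qfac]
lemma qfac_succ (q : ℂ) (m : ℕ) : qfac q (m+1) = qfac q m * (1 - q ^ (m+1)) :=
  Finset.prod_range_succ _ _

lemma one_sub_pow_ne (q : ℂ) (hfac : ∀ m : ℕ, qfac q m ≠ 0) (m : ℕ) :
    (1 : ℂ) - q ^ (m+1) ≠ 0 := by
  have h := hfac (m+1)
  rw [qfac_succ] at h
  exact right_ne_zero_of_mul h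

lemma qPochNat_succ (x q : ℂ) (n : ℕ) :
    qPochNat x q (n+1) = qPochNat x q n * (1 - x * q ^ n) := Finset.prod_range_succ _ _

lemma qPochNat_succ' (x q : ℂ) (n : ℕ) :
    qPochNat x q (n+1) = (1 - x) * qPochNat (x*q) q n := by
  rw [qPochNat, Finset.prod_range_succ']
  simp only [pow_zero, mul_one, pow_succ]
  rw [mul_comm]
  congr 1
  unfold qPochNat
  apply Finset.prod_congr rfl
  intro k _
  ring

lemma choose_two_succ (d : ℕ) : (d+1).choose 2 = d.choose 2 + d := by
  rw [Nat.choose_succ_succ]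
  simp [Nat.choose_one_right, Nat.add_comm]

lemma two_mul_choose_two (d : ℕ) : 2 * d.choose 2 = d * (d - 1) := by
  induction d with
  | zero => simp
  | succ d ih =>
    rw [choose_two_succ, Nat.mul_add, ih, Nat.add_sub_cancel]
    cases d with
    | zero => rfl
    | succ m => simp [Nat.succ_sub_one]; ring

lemma pascal (q : ℂ) (hfac : ∀ m : ℕ, qfac q m ≠ 0) (k d : ℕ) (hd : d + 1 ≤ k) :
    qfac q (k+1) / (qfac q (d+1) * qfac q (k+1-(d+1))) =
      q^(d+1) * (qfac q k / (qfac q (d+1) * qfac q (k-(d+1)))) +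
        qfac q k / (qfac q d * qfac q (k-d)) := by
  obtain ⟨e, rfl⟩ : ∃ e, k = d + 1 + e := ⟨k - (d+1), by omega⟩
  have h1 : d + 1 + e + 1 - (d + 1) = e + 1 := by omega
  have h2 : d + 1 + e - (d + 1) = e := by omega
  have h3 : d + 1 + e - d = e + 1 := by omega
  rw [h1, h2, h3]
  have e1 : qfac q (d+1+e+1) = qfac q (d+1+e) * (1 - q ^ (d+1+e+1)) := qfac_succ _ _
  have e2 : qfac q (e+1) = qfac q e * (1 - q ^ (e+1)) := qfac_succ _ _
  have e3 : qfac q (d+1) = qfac q d * (1 - q ^ (d+1)) := qfac_succ _ _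
  rw [e1, e2, e3]
  have n1 := hfac (d+1+e)
  have n2 := hfac e
  have n3 := hfac d
  have n4 := one_sub_pow_ne q hfac (d+e)
  have n5 := one_sub_pow_ne q hfac e
  have n6 := one_sub_pow_ne q hfac d
  field_simp
  ring

lemma euler (q : ℂ) (hfac : ∀ m : ℕ, qfac q m ≠ 0) (k : ℕ) :
    ∀ x : ℂ, ∑ d ∈ Finset.range (k+1),
      (-1)^d * q ^ (d.choose 2) * x^d * qfac q k / (qfac q d * qfac q (k-d))
      = qPochNat x q k := by
  induction k with
  | zero =>
    intro x
    simp [qfac_zero, qPochNat]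
  | succ k ih =>
    intro x
    rw [Finset.sum_range_succ', Finset.sum_range_succ]
    have hmid : ∑ d ∈ Finset.range k,
        (-1:ℂ)^(d+1) * q ^ ((d+1).choose 2) * x^(d+1) * qfac q (k+1) /
          (qfac q (d+1) * qfac q (k+1-(d+1)))
      = ∑ d ∈ Finset.range k,
        (((-1:ℂ)^(d+1) * q ^ ((d+1).choose 2) * (x*q)^(d+1) * qfac q k /
          (qfac q (d+1) * qfac q (k-(d+1))))
         + (-x) * ((-1:ℂ)^d * q ^ (d.choose 2) * (x*q)^d * qfac q k /
          (qfac q d * qfac q (k-d)))) := by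
      apply Finset.sum_congr rfl
      intro d hd
      have hdk : d + 1 ≤ k := Finset.mem_range.mp hd
      rw [mul_div_assoc, pascal q hfac k d hdk, choose_two_succ]
      rw [mul_div_assoc, mul_div_assoc]
      ring
    rw [hmid, Finset.sum_add_distrib, ← Finset.mul_sum]
    have h1 : ∑ d ∈ Finset.range k,
        (-1:ℂ)^(d+1) * q ^ ((d+1).choose 2) * (x*q)^(d+1) * qfac q k /
          (qfac q (d+1) * qfac q (k-(d+1)))
        = qPochNat (x*q) q k - 1 := by
      have h := Finset.sum_range_succ'
        (fun d => (-1:ℂ)^d * q ^ (d.choose 2) * (x*q)^d * qfac q k /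
          (qfac q d * qfac q (k-d))) k
      rw [ih (x*q)] at h
      norm_num [qfac_zero] at h
      rw [div_self (hfac k)] at h
      linear_combination -h
    have h2 : ∑ d ∈ Finset.range k,
        (-1:ℂ)^d * q ^ (d.choose 2) * (x*q)^d * qfac q k /
          (qfac q d * qfac q (k-d))
        = qPochNat (x*q) q k - (-1:ℂ)^k * q ^ (k.choose 2) * (x*q)^k := by
      have h := Finset.sum_range_succ
        (fun d => (-1:ℂ)^d * q ^ (d.choose 2) * (x*q)^d * qfac q k /
          (qfac q d * qfac q (k-d))) k
      rw [ih (x*q)] at h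
      simp only [Nat.sub_self, qfac_zero, mul_one] at h
      rw [mul_div_assoc, div_self (hfac k), mul_one] at h
      linear_combination -h
    rw [h1, h2]
    have hlast : (-1:ℂ)^(k+1) * q ^ ((k+1).choose 2) * x^(k+1) * qfac q (k+1) /
        (qfac q (k+1) * qfac q (k+1-(k+1))) =
        (-1:ℂ)^(k+1) * q ^ ((k+1).choose 2) * x^(k+1) := by
      simp only [Nat.sub_self, qfac_zero, mul_one]
      rw [mul_div_assoc, div_self (hfac (k+1)), mul_one]
    have hfirst : (-1:ℂ)^0 * q ^ (Nat.choose 0 2) * x^0 * qfac q (k+1) /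
        (qfac q 0 * qfac q (k+1-0)) = 1 := by
      simp only [pow_zero, Nat.sub_zero, one_mul, mul_one, Nat.choose, qfac_zero]
      exact div_self (hfac (k+1))
    rw [hlast, hfirst, qPochNat_succ', choose_two_succ]
    ring

lemma two_mul_choose_two_int (d : ℕ) : 2 * (d.choose 2 : ℤ) = d * (d - 1) := by
  induction d with
  | zero => simp
  | succ d ih =>
    rw [choose_two_succ]
    push_cast
    push_cast at ih
    linear_combination ih

lemma sq_from_choose (d : ℕ) : d.choose 2 + (d+1).choose 2 = d * d := by
  rw [choose_two_succ]
  have h1 := two_mul_choose_two d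
  cases d with
  | zero => rfl
  | succ m =>
    simp only [Nat.succ_sub_one] at h1
    have h2 : (m+1)*(m+1) = (m+1)*m + (m+1) := by ring
    omega

lemma qfac_add (q : ℂ) (m j : ℕ) : qfac q (m + j) = qfac q m * qPochNat (q^(m+1)) q j := by
  induction j with
  | zero => simp [qPochNat]
  | succ j ih =>
    rw [← add_assoc, qfac_succ, ih, qPochNat_succ]
    ring

lemma qflip (q : ℂ) (hq : q ≠ 0) (d N : ℕ) (hdN : d ≤ N) :
    q ^ (d*N) * qPochNat ((q^N)⁻¹) q d =
      (-1)^d * q ^ (d.choose 2) * qPochNat (q^(N-d+1)) q d := by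
  have hleft : q ^ (d*N) * qPochNat ((q^N)⁻¹) q d
      = ∏ k ∈ Finset.range d, (q^N * (1 - (q^N)⁻¹ * q^k)) := by
    rw [Finset.prod_mul_distrib, Finset.prod_const, Finset.card_range, ← pow_mul, mul_comm N d, qPochNat]
  rw [hleft]
  have hstep : ∀ k ∈ Finset.range d, q^N * (1 - (q^N)⁻¹ * q^k)
      = (-q^k) * (1 - q^(N-k)) := by
    intro k hk
    have hk' : k < d := Finset.mem_range.mp hk
    have hNk : q^(N-k) * q^k = q^N := by rw [← pow_add]; congr 1; omega
    have hQN : (q:ℂ)^N ≠ 0 := pow_ne_zero _ hq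
    field_simp
    linear_combination -hNk
  rw [Finset.prod_congr rfl hstep, Finset.prod_mul_distrib]
  have hneg : ∏ k ∈ Finset.range d, (-q^k : ℂ) = (-1)^d * q ^ (d.choose 2) := by
    have h : ∀ k ∈ Finset.range d, (-q^k : ℂ) = (-1) * q^k := by intro k _; ring
    rw [Finset.prod_congr rfl h, Finset.prod_mul_distrib, Finset.prod_const,
      Finset.prod_pow_eq_pow_sum, Finset.sum_range_id, Nat.choose_two_right, Finset.card_range]
  have hpoch : ∏ k ∈ Finset.range d, (1 - q^(N-k) : ℂ) = qPochNat (q^(N-d+1)) q d := by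
    rw [← Finset.prod_range_reflect (fun k => (1 - q^(N-k) : ℂ)) d]
    unfold qPochNat
    apply Finset.prod_congr rfl
    intro j hj
    have hj' : j < d := Finset.mem_range.mp hj
    have he : N - (d - 1 - j) = (N-d+1)+j := by omega
    rw [he, pow_add]
  rw [hneg, hpoch]

lemma step (q s : ℂ) (hs : s ^ 2 = q) (hs0 : s ≠ 0)
    (hfac : ∀ m : ℕ, qfac q m ≠ 0) (n d1 : ℕ) (hd1 : d1 ≤ n) :
    ∑ d2 ∈ Finset.range (d1 + 1),
        (-1) ^ (d1 + d2) *
          s ^ ((d2 : ℤ) * ((d2 : ℤ) - 2 * d1 - 2 * n - 3) + (d1 : ℤ) * ((d1 : ℤ) + 1)) *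
          qfac q d1 * qfac q n / (qfac q d2 * qfac q (d1 - d2) * qfac q (n - d1))
      = q ^ (-((n : ℤ) + 1) * d1) * qPochNat (q ^ (n + 2)) q d1 *
          qPochNat (q ^ (n - d1 + 1)) q d1 := by
  have hq0 : q ≠ 0 := by rw [← hs]; exact pow_ne_zero _ hs0
  have hZ : ∀ d2 : ℕ,
      s ^ ((d2 : ℤ) * ((d2 : ℤ) - 2 * d1 - 2 * n - 3) + (d1 : ℤ) * ((d1 : ℤ) + 1))
      = q ^ (d2.choose 2) * ((q ^ (d1+n+1))⁻¹) ^ d2 * q ^ ((d1+1).choose 2) := by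
    intro d2
    have hA : ((d2 : ℤ) * ((d2 : ℤ) - 2 * d1 - 2 * n - 3) + (d1 : ℤ) * ((d1 : ℤ) + 1))
        = 2 * (((d2.choose 2 : ℕ) : ℤ) + (((d1+1).choose 2 : ℕ) : ℤ)
            - ((d2 * (d1+n+1) : ℕ) : ℤ)) := by
      have c2 := two_mul_choose_two_int d2
      have c1 := two_mul_choose_two_int (d1+1)
      push_cast at c1 c2 ⊢
      linear_combination -c2 - c1
    rw [hA, zpow_mul]
    have hs2 : s ^ (2:ℤ) = q := by
      rw [show (2:ℤ) = ((2:ℕ):ℤ) from rfl, zpow_natCast, hs]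
    rw [hs2, zpow_sub₀ hq0, zpow_add₀ hq0, zpow_natCast, zpow_natCast, zpow_natCast]
    rw [pow_mul, inv_pow]
    ring
  have hsum : ∑ d2 ∈ Finset.range (d1 + 1),
        (-1) ^ (d1 + d2) *
          s ^ ((d2 : ℤ) * ((d2 : ℤ) - 2 * d1 - 2 * n - 3) + (d1 : ℤ) * ((d1 : ℤ) + 1)) *
          qfac q d1 * qfac q n / (qfac q d2 * qfac q (d1 - d2) * qfac q (n - d1))
      = ((-1)^d1 * q^((d1+1).choose 2) * (qfac q n / qfac q (n - d1))) *
        ∑ d2 ∈ Finset.range (d1 + 1),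
          (-1)^d2 * q ^ (d2.choose 2) * ((q ^ (d1+n+1))⁻¹)^d2 * qfac q d1 /
            (qfac q d2 * qfac q (d1-d2)) := by
    rw [Finset.mul_sum]
    apply Finset.sum_congr rfl
    intro d2 _
    rw [hZ d2]
    have n1 := hfac d2
    have n2 := hfac (d1-d2)
    have n3 := hfac (n-d1)
    have n4 : (q:ℂ)^(d1+n+1) ≠ 0 := pow_ne_zero _ hq0
    field_simp
    ring
  rw [hsum, euler q hfac d1 ((q ^ (d1+n+1))⁻¹)]
  have hdiv : qfac q n / qfac q (n - d1) = qPochNat (q^(n-d1+1)) q d1 := by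
    have h := qfac_add q (n-d1) d1
    rw [show n - d1 + d1 = n from by omega] at h
    rw [h, mul_div_cancel_left₀ _ (hfac (n-d1))]
  rw [hdiv]
  have hflip := qflip q hq0 d1 (d1+n+1) (by omega)
  rw [show d1+n+1 - d1 + 1 = n + 2 from by omega] at hflip
  have hx : qPochNat ((q^(d1+n+1))⁻¹) q d1
      = (q^(d1*(d1+n+1)))⁻¹ * ((-1)^d1 * q^(d1.choose 2) * qPochNat (q^(n+2)) q d1) := by
    rw [← hflip, inv_mul_cancel_left₀ (pow_ne_zero _ hq0)]
  rw [hx]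
  have hzr : q ^ (-((n : ℤ) + 1) * (d1:ℤ)) = (q ^ (d1*(n+1)))⁻¹ := by
    rw [show (-((n : ℤ) + 1) * d1) = -((d1*(n+1) : ℕ) : ℤ) by push_cast; ring,
      zpow_neg, zpow_natCast]
  rw [hzr]
  have hsgn : ((-1:ℂ))^d1 * (-1)^d1 = 1 := by rw [← mul_pow]; norm_num
  have hppow : q^((d1+1).choose 2) * ((q^(d1*(d1+n+1)))⁻¹ * q^(d1.choose 2))
      = (q^(d1*(n+1)))⁻¹ := by
    have he : d1*(d1+n+1) = d1.choose 2 + (d1+1).choose 2 + d1*(n+1) := by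
      have h1 := sq_from_choose d1
      have h2 : d1*(d1+n+1) = d1*d1 + d1*(n+1) := by ring
      omega
    rw [he, pow_add, pow_add]
    field_simp
  linear_combination (q^((d1+1).choose 2) * (q^(d1*(d1+n+1)))⁻¹ * q^(d1.choose 2) *
      qPochNat (q^(n+2)) q d1 * qPochNat (q^(n-d1+1)) q d1) * hsgn
    + (qPochNat (q^(n+2)) q d1 * qPochNat (q^(n-d1+1)) q d1) * hppow

/-- The double-sum formula for the normalized colored Jones polynomial of the figure-eight
knot equals the Habiro/Masbaum single-sum formula; `s` is a fixed square root of `q`. -/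
theorem figure_eight_double_single (q s : ℂ) (hs : s ^ 2 = q) (hs0 : s ≠ 0)
    (hfac : ∀ m : ℕ, qfac q m ≠ 0) (n : ℕ) :
    ∑ d1 ∈ Finset.range (n + 1), ∑ d2 ∈ Finset.range (d1 + 1),
        (-1) ^ (d1 + d2) *
          s ^ ((d2 : ℤ) * ((d2 : ℤ) - 2 * d1 - 2 * n - 3) + (d1 : ℤ) * ((d1 : ℤ) + 1)) *
          qfac q d1 * qfac q n / (qfac q d2 * qfac q (d1 - d2) * qfac q (n - d1))
      = ∑ d1 ∈ Finset.range (n + 1),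
          q ^ (-((n : ℤ) + 1) * d1) * qPochNat (q ^ (n + 2)) q d1 *
            qPochNat (q ^ (n - d1 + 1)) q d1 := by
  apply Finset.sum_congr rfl
  intro d1 hd1
  exact step q s hs hs0 hfac n d1 (by have := Finset.mem_range.mp hd1; omega)
end

section
/- The trefoil vortex sum formula: for every nonnegative integer n, the product of degenerate inverse R-matrix entries with the local-minimum factor, summed over 0 ≤ d ≤ n, gives q^{3n(n+2)/4} ∑_{d=0}^{n} (R^{-1})^{0,d}_{d,0} (R^{-1})^{d,0}_{d,0} (R^{-1})^{d,0}_{0,d} · q^{d - n/2} = ∑_{d=0}^{n} q^{(n+1)d+n} (q)_n/(q)_{n-d}. -/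
/-- The inverse R-matrix entry `(R⁻¹)^{ab}_{cd}(q)` for the `n`-colored Jones polynomial,
where `t` is a fixed fourth root of `q`. -/
noncomputable def Rinv (q t : ℂ) (n a b c d : ℕ) : ℂ :=
  t ^ (-4 * (a : ℤ) * b + 2 * (n : ℤ) * ((b : ℤ) + d) - (n : ℤ) ^ 2) *
    qfac q c * qfac q (n - d) / (qfac q (n - a) * qfac q b * qfac q (a - d))

/-- Trefoil vortex sum:
`q^{3n(n+2)/4} ∑_{d=0}^n (R⁻¹)^{0,d}_{d,0} (R⁻¹)^{d,0}_{d,0} (R⁻¹)^{d,0}_{0,d} μ_d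
= ∑_{d=0}^n q^{(n+1)d+n} (q)_n/(q)_{n-d}`, where `μ_d = q^{d-n/2}` and `t⁴ = q`. -/
theorem trefoil_vortex_sum (q t : ℂ) (ht : t ^ 4 = q) (ht0 : t ≠ 0)
    (hfac : ∀ m : ℕ, qfac q m ≠ 0) (n : ℕ) :
    t ^ (3 * (n : ℤ) * ((n : ℤ) + 2)) *
        ∑ d ∈ Finset.range (n + 1),
          Rinv q t n 0 d d 0 * Rinv q t n d 0 d 0 * Rinv q t n d 0 0 d *
            t ^ (4 * (d : ℤ) - 2 * n)
      = ∑ d ∈ Finset.range (n + 1), q ^ ((n + 1) * d + n) * qfac q n / qfac q (n - d) := by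
  have h0 : qfac q 0 = 1 := by simp [qfac]
  rw [Finset.mul_sum]
  refine Finset.sum_congr rfl (fun d hd => ?_)
  have hq : q ^ ((n + 1) * d + n) = t ^ (4 * ((n : ℤ) + 1) * d + 4 * n) := by
    have h1 : (4 * ((n : ℤ) + 1) * d + 4 * n) = ((4 * ((n + 1) * d + n) : ℕ) : ℤ) := by
      push_cast; ring
    rw [h1, zpow_natCast, pow_mul, ht]
  rw [hq]
  simp only [Rinv, Nat.sub_self, Nat.sub_zero, h0]
  have step1 :
      t ^ (3 * (n : ℤ) * ((n : ℤ) + 2)) *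
        (t ^ (-4 * ((0:ℕ) : ℤ) * (d:ℤ) + 2 * (n : ℤ) * ((d : ℤ) + ((0:ℕ):ℤ)) - (n : ℤ) ^ 2) *
            qfac q d * qfac q n / (qfac q n * qfac q d * 1) *
          (t ^ (-4 * (d : ℤ) * ((0:ℕ):ℤ) + 2 * (n : ℤ) * (((0:ℕ):ℤ) + ((0:ℕ):ℤ)) - (n : ℤ) ^ 2) *
            qfac q d * qfac q n / (qfac q (n - d) * 1 * qfac q d)) *
          (t ^ (-4 * (d : ℤ) * ((0:ℕ):ℤ) + 2 * (n : ℤ) * (((0:ℕ):ℤ) + (d:ℤ)) - (n : ℤ) ^ 2) *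
            1 * qfac q (n - d) / (qfac q (n - d) * 1 * 1)) *
          t ^ (4 * (d : ℤ) - 2 * n))
      = t ^ (3 * (n : ℤ) * ((n : ℤ) + 2)) * t ^ (2 * (n : ℤ) * d - (n : ℤ) ^ 2) *
          t ^ (-(n : ℤ) ^ 2) * t ^ (2 * (n : ℤ) * d - (n : ℤ) ^ 2) * t ^ (4 * (d : ℤ) - 2 * n) *
          (qfac q n / qfac q (n - d)) := by
    have h1 := hfac n
    have h2 := hfac d
    have h3 := hfac (n - d)
    have h4 : ∀ m : ℤ, t ^ m ≠ 0 := fun m => zpow_ne_zero m ht0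
    field_simp [h4]
    ring
  rw [step1, ← zpow_add₀ ht0, ← zpow_add₀ ht0, ← zpow_add₀ ht0, ← zpow_add₀ ht0,
    show 3 * (n : ℤ) * ((n : ℤ) + 2) + (2 * (n : ℤ) * d - (n : ℤ) ^ 2) + (-(n : ℤ) ^ 2) +
        (2 * (n : ℤ) * d - (n : ℤ) ^ 2) + (4 * (d : ℤ) - 2 * n) = 4 * ((n : ℤ) + 1) * d + 4 * n
      from by ring,
    mul_div_assoc]
end
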